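/- Conversely to path projection: let (G[X], G₂) be a separation of G with separator S, let F* be a graph on a subset of S, and suppose for each edge ab ∈ E(F*) there is a fixed a–b path P_{ab} in G whose internal vertices lie outside X, such that the paths {P_{ab}}_{ab ∈ E(F*)} are pairwise internally vertex-disjoint and each is internally disjoint from X. If Q₁,…,Q_k are pairwise internally vertex-disjoint paths in G[X] + E(F*), then replacing in each Qᵢ every used edge ab of F* by the path P_{ab} yields pairwise internally vertex-disjoint paths Q₁^{(Y)},…,Q_k^{(Y)} in G with the same endpoints. -/

import Mathlib

open SimpleGraph

/-- The internal vertices of a walk (support minus the two endpoints). -/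
def Internal {V : Type*} {G : SimpleGraph V} {u v : V} (p : G.Walk u v) : List V :=
  p.support.tail.dropLast

/-- Two walks are internally vertex-disjoint if no vertex of one appears as an
internal vertex of the other. -/
def IntDisjoint {V : Type*} {G : SimpleGraph V} {a b c d : V}
    (p : G.Walk a b) (q : G.Walk c d) : Prop :=
  (∀ x ∈ p.support, x ∉ Internal q) ∧ (∀ x ∈ q.support, x ∉ Internal p)

/-- A topological minor model of `H` in `G`. -/
structure TopMinorModel {α β : Type*} (H : SimpleGraph α) (G : SimpleGraph β) where
  η : α → β
  inj : Function.Injective η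
  path : ∀ ⦃u v : α⦄, H.Adj u v → G.Walk (η u) (η v)
  isPath : ∀ ⦃u v : α⦄ (h : H.Adj u v), (path h).IsPath
  avoid : ∀ ⦃u v : α⦄ (h : H.Adj u v), ∀ x ∈ Internal (path h), ∀ w : α, x ≠ η w
  disj : ∀ ⦃u v u' v' : α⦄ (h : H.Adj u v) (h' : H.Adj u' v'),
    s(u, v) ≠ s(u', v') → IntDisjoint (path h) (path h')

/-- A separation of a graph `G`, given by the vertex sets of the two sides. -/
structure Separation {V : Type*} (G : SimpleGraph V) where
  A : Set V
  B : Set V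
  cover : A ∪ B = Set.univ
  noEdge : ∀ a ∈ A \ B, ∀ b ∈ B \ A, ¬ G.Adj a b


/-- The graph on the side X of a separation augmented with the edges of F. -/
def addEdges {V : Type*} (G : SimpleGraph V) (X : Set V) (F : SimpleGraph V) :
    SimpleGraph V where
  Adj u v := (G.Adj u v ∧ u ∈ X ∧ v ∈ X) ∨ F.Adj u v
  symm := by
    constructor
    intro u v h
    rcases h with ⟨h, hu, hv⟩ | h
    · exact Or.inl ⟨h.symm, hv, hu⟩
    · exact Or.inr h.symm
  loopless := by
    constructor
    intro u h
    rcases h with ⟨h, _, _⟩ | h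
    · exact G.ne_of_adj h rfl
    · exact F.ne_of_adj h rfl

section Helpers

variable {V : Type*} {W : SimpleGraph V} {u v b x : V}

lemma support_dropLast_concat (p : W.Walk u v) :
    p.support.dropLast ++ [v] = p.support := by
  induction p with
  | nil => simp
  | @cons a c d h p ih =>
    rw [Walk.support_cons]
    rcases hs : p.support with _ | ⟨y, ys⟩
    · exact absurd hs p.support_ne_nil
    · rw [hs] at ih
      rw [List.dropLast_cons₂, List.cons_append, ih]

lemma tail_eq_internal_concat (p : W.Walk u v) (h : p.support.tail ≠ []) :
    p.support.tail = Internal p ++ [v] := by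
  rcases ht : p.support.tail with _ | ⟨y, ys⟩
  · exact absurd ht h
  · have h1 := support_dropLast_concat p
    rw [p.support_eq_cons, ht, List.dropLast_cons₂, List.cons_append] at h1
    injection h1 with _ h2
    unfold Internal
    rw [ht]
    exact h2.symm

lemma internal_subset_support (p : W.Walk u v) : Internal p ⊆ p.support :=
  fun x hx => List.tail_subset _ ((List.dropLast_sublist _).subset hx)

lemma mem_support_cases (p : W.Walk u v) (hx : x ∈ p.support) :
    x = u ∨ x = v ∨ x ∈ Internal p := by
  rw [p.support_eq_cons] at hx
  rcases List.mem_cons.mp hx with h | h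
  · exact Or.inl h
  · rcases ht : p.support.tail with _ | ⟨y, ys⟩
    · rw [ht] at h; simp at h
    · rw [tail_eq_internal_concat p (by rw [ht]; simp)] at h
      rcases List.mem_append.mp h with h | h
      · exact Or.inr (Or.inr h)
      · exact Or.inr (Or.inl (List.mem_singleton.mp h))

lemma ne_of_mem_internal {p : W.Walk u v} (hp : p.IsPath) (hx : x ∈ Internal p) :
    x ≠ u ∧ x ≠ v := by
  have hnd := hp.support_nodup
  rw [p.support_eq_cons, List.nodup_cons] at hnd
  have htail : x ∈ p.support.tail := (List.dropLast_sublist _).subset hx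
  constructor
  · rintro rfl
    exact absurd htail hnd.1
  · rintro rfl
    have hne : p.support.tail ≠ [] := by
      intro he; rw [he] at htail; simp at htail
    rw [tail_eq_internal_concat p hne] at hnd
    exact List.disjoint_of_nodup_append hnd.2 hx (List.mem_singleton.mpr rfl)

lemma mem_internal_of {p : W.Walk u v} (hx : x ∈ p.support) (hu : x ≠ u) (hv : x ≠ v) :
    x ∈ Internal p := by
  rw [p.support_eq_cons] at hx
  rcases List.mem_cons.mp hx with h | h
  · exact absurd h hu
  · rcases ht : p.support.tail with _ | ⟨y, ys⟩
    · rw [ht] at h; simp at h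
    · rw [tail_eq_internal_concat p (by rw [ht]; simp)] at h
      rcases List.mem_append.mp h with h | h
      · exact h
      · exact absurd (List.mem_singleton.mp h) hv

lemma isPath_append {p : W.Walk u b} {q : W.Walk b v} (hp : p.IsPath) (hq : q.IsPath)
    (hd : ∀ x ∈ p.support, x ∈ q.support → x = b) : (p.append q).IsPath := by
  rw [Walk.isPath_def, Walk.support_append]
  have hqnd := hq.support_nodup
  rw [q.support_eq_cons, List.nodup_cons] at hqnd
  refine List.Nodup.append hp.support_nodup hqnd.2 ?_
  intro x hxp hxq
  have := hd x hxp (List.tail_subset _ hxq)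
  subst this
  exact hqnd.1 hxq

end Helpers


section Expand

variable {V : Type*} (G : SimpleGraph V) (X : Set V) (Fstar : SimpleGraph V)
  (P : ∀ ⦃a b : V⦄, Fstar.Adj a b → G.Walk a b)

lemma addEdges_adj {u v : V} :
    (addEdges G X Fstar).Adj u v ↔ (G.Adj u v ∧ u ∈ X ∧ v ∈ X) ∨ Fstar.Adj u v := Iff.rfl

open Classical in
noncomputable def expand : ∀ {u v : V}, (addEdges G X Fstar).Walk u v → G.Walk u v
  | _, _, .nil => .nil
  | _, _, @Walk.cons _ _ a c _ h p =>
    if hg : G.Adj a c ∧ a ∈ X ∧ c ∈ X then Walk.cons hg.1 (expand p)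
    else (P (((addEdges_adj G X Fstar).mp h).resolve_left hg)).append (expand p)

lemma walkX (hX : ∀ a b : V, Fstar.Adj a b → a ∈ X ∧ b ∈ X) :
    ∀ {u v : V} (q : (addEdges G X Fstar).Walk u v), u ∈ X → ∀ x ∈ q.support, x ∈ X := by
  intro u v q
  induction q with
  | nil =>
    intro hu x hx
    rw [Walk.support_nil, List.mem_singleton] at hx
    exact hx ▸ hu
  | @cons a c d h p ih =>
    intro hu x hx
    have hw : c ∈ X := by
      rcases (addEdges_adj G X Fstar).mp h with ⟨_, _, hw⟩ | h'
      · exact hw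
      · exact (hX _ _ h').2
    rw [Walk.support_cons, List.mem_cons] at hx
    rcases hx with rfl | hx
    · exact hu
    · exact ih hw x hx

lemma expand_support :
    ∀ {u v : V} (q : (addEdges G X Fstar).Walk u v), ∀ x ∈ (expand G X Fstar P q).support,
      x ∈ q.support ∨ ∃ a b, ∃ h : Fstar.Adj a b, s(a, b) ∈ q.edges ∧ x ∈ Internal (P h) := by
  intro u v q
  induction q with
  | nil =>
    intro x hx
    left
    simpa [expand] using hx
  | @cons a c d h p ih =>
    intro x hx
    simp only [expand] at hx
    split_ifs at hx with hg
    · rw [Walk.support_cons, List.mem_cons] at hx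
      rcases hx with rfl | hx
      · left; rw [Walk.support_cons]; exact List.mem_cons_self
      · rcases ih x hx with h1 | ⟨a', b', h', he, hi⟩
        · left; rw [Walk.support_cons]; exact List.mem_cons_of_mem _ h1
        · right
          exact ⟨a', b', h', by rw [Walk.edges_cons]; exact List.mem_cons_of_mem _ he, hi⟩
    · rw [Walk.mem_support_append_iff] at hx
      rcases hx with hx | hx
      · rcases mem_support_cases _ hx with rfl | rfl | hi
        · left; rw [Walk.support_cons]; exact List.mem_cons_self
        · left; rw [Walk.support_cons]; exact List.mem_cons_of_mem _ p.start_mem_support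
        · right
          exact ⟨a, c, ((addEdges_adj G X Fstar).mp h).resolve_left hg,
            by rw [Walk.edges_cons]; exact List.mem_cons_self, hi⟩
      · rcases ih x hx with h1 | ⟨a', b', h', he, hi⟩
        · left; rw [Walk.support_cons]; exact List.mem_cons_of_mem _ h1
        · right
          exact ⟨a', b', h', by rw [Walk.edges_cons]; exact List.mem_cons_of_mem _ he, hi⟩

lemma expand_isPath (hX : ∀ a b : V, Fstar.Adj a b → a ∈ X ∧ b ∈ X)
    (hPpath : ∀ ⦃a b : V⦄ (h : Fstar.Adj a b), (P h).IsPath)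
    (hPint : ∀ ⦃a b : V⦄ (h : Fstar.Adj a b), ∀ x ∈ Internal (P h), x ∉ X)
    (hPdisj : ∀ ⦃a b a' b' : V⦄ (h : Fstar.Adj a b) (h' : Fstar.Adj a' b'),
      s(a, b) ≠ s(a', b') → IntDisjoint (P h) (P h')) :
    ∀ {u v : V} (q : (addEdges G X Fstar).Walk u v), q.IsPath → u ∈ X →
      (expand G X Fstar P q).IsPath := by
  intro u v q
  induction q with
  | nil => intro _ _; simp [expand]
  | @cons a c d h p ih =>
    intro hq ha
    have hc : c ∈ X := by
      rcases (addEdges_adj G X Fstar).mp h with ⟨_, _, hw⟩ | h'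
      · exact hw
      · exact (hX _ _ h').2
    rw [Walk.cons_isPath_iff] at hq
    have hexp : (expand G X Fstar P p).IsPath := ih hq.1 hc
    have hnotina : a ∉ (expand G X Fstar P p).support := by
      intro hmem
      rcases expand_support G X Fstar P p a hmem with h1 | ⟨a', b', h', he, hi⟩
      · exact hq.2 h1
      · exact hPint h' a hi ha
    simp only [expand]
    split_ifs with hg
    · exact hexp.cons hnotina
    · refine isPath_append (hPpath _) hexp ?_
      intro x hxP hxE
      rcases mem_support_cases _ hxP with rfl | rfl | hi
      · exact absurd hxE hnotina
      · rfl
      · exfalso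
        rcases expand_support G X Fstar P p x hxE with h1 | ⟨a', b', h'', he, hi'⟩
        · exact hPint _ x hi (walkX G X Fstar hX p hc x h1)
        · have hne : s(a, c) ≠ s(a', b') := by
            intro heq
            exact hq.2 (p.fst_mem_support_of_mem_edges (heq ▸ he))
          exact (hPdisj (((addEdges_adj G X Fstar).mp h).resolve_left hg) h'' hne).1 x hxP hi'

end Expand

/-- expanding internally disjoint paths of G[X] + E(F*) back into G by
replacing each F*-edge by its realizing path. -/
theorem stmt18 {V : Type*} (G : SimpleGraph V) (X : Set V) (S : Separation G)
    (hA : S.A = X)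
    (Fstar : SimpleGraph V)
    (hFroot : ∀ a b, Fstar.Adj a b → a ∈ S.A ∩ S.B ∧ b ∈ S.A ∩ S.B)
    (P : ∀ ⦃a b : V⦄, Fstar.Adj a b → G.Walk a b)
    (hPpath : ∀ ⦃a b : V⦄ (h : Fstar.Adj a b), (P h).IsPath)
    (hPint : ∀ ⦃a b : V⦄ (h : Fstar.Adj a b), ∀ x ∈ Internal (P h), x ∉ X)
    (hPdisj : ∀ ⦃a b a' b' : V⦄ (h : Fstar.Adj a b) (h' : Fstar.Adj a' b'),
      s(a, b) ≠ s(a', b') → IntDisjoint (P h) (P h'))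
    (k : ℕ) (s t : Fin k → V) (hsX : ∀ i, s i ∈ X ∧ t i ∈ X)
    (Q : ∀ i, (addEdges G X Fstar).Walk (s i) (t i))
    (hQ : ∀ i, (Q i).IsPath)
    (hQdisj : ∀ i j, i ≠ j → IntDisjoint (Q i) (Q j))
    (hUse : ∀ a b, Fstar.Adj a b → ∀ i j,
      s(a, b) ∈ (Q i).edges → s(a, b) ∈ (Q j).edges → i = j) :
    ∃ R : ∀ i, G.Walk (s i) (t i), (∀ i, (R i).IsPath) ∧
      ∀ i j, i ≠ j → IntDisjoint (R i) (R j) := by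
  have hX : ∀ a b : V, Fstar.Adj a b → a ∈ X ∧ b ∈ X := by
    intro a b h
    obtain ⟨ha, hb⟩ := hFroot a b h
    exact ⟨hA ▸ ha.1, hA ▸ hb.1⟩
  refine ⟨fun i => expand G X Fstar P (Q i),
    fun i => expand_isPath G X Fstar P hX hPpath hPint hPdisj (Q i) (hQ i) (hsX i).1, ?_⟩
  have key : ∀ i j, i ≠ j → ∀ x ∈ (expand G X Fstar P (Q i)).support,
      x ∉ Internal (expand G X Fstar P (Q j)) := by
    intro i j hij x hx hxint
    have hxsupj : x ∈ (expand G X Fstar P (Q j)).support := internal_subset_support _ hxint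
    have hRj : (expand G X Fstar P (Q j)).IsPath :=
      expand_isPath G X Fstar P hX hPpath hPint hPdisj (Q j) (hQ j) (hsX j).1
    rcases expand_support G X Fstar P (Q i) x hx with hxi | ⟨a, b, h, he, hxi⟩
    · have hxX : x ∈ X := walkX G X Fstar hX (Q i) (hsX i).1 x hxi
      rcases expand_support G X Fstar P (Q j) x hxsupj with hxj | ⟨a, b, h, he, hxj⟩
      · have hne := ne_of_mem_internal hRj hxint
        exact (hQdisj i j hij).1 x hxi (mem_internal_of hxj hne.1 hne.2)
      · exact hPint h x hxj hxX
    · have hxnX : x ∉ X := hPint h x hxi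
      rcases expand_support G X Fstar P (Q j) x hxsupj with hxj | ⟨a', b', h', he', hxj⟩
      · exact hxnX (walkX G X Fstar hX (Q j) (hsX j).1 x hxj)
      · by_cases hee : s(a, b) = s(a', b')
        · exact hij (hUse a b h i j he (hee ▸ he'))
        · exact (hPdisj h h' hee).1 x (internal_subset_support _ hxi) hxj
  exact fun i j hij => ⟨key i j hij, key j i hij.symm⟩
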